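/- Let f : ℕ → ℝ satisfy 0 ≤ f(s) ≤ 1 for all s, and define φ(t) = ∏_{s=1}^{t-1} (1 + 1/s - f(s+1)/(2s)). Then there is a constant C > 0 such that φ(t) ≥ C * √t for all t ≥ 1. -/

import Mathlib

theorem stmt_2 (f : ℕ → ℝ) (hf : ∀ s, 0 ≤ f s ∧ f s ≤ 1)
    (φ : ℕ → ℝ)
    (hφ : ∀ t, φ t = ∏ s ∈ Finset.Icc 1 (t - 1),
      (1 + 1 / (s : ℝ) - f (s + 1) / (2 * s))) :
    ∃ C : ℝ, 0 < C ∧ ∀ t : ℕ, 1 ≤ t → C * Real.sqrt t ≤ φ t := by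
  refine ⟨1, one_pos, ?_⟩
  have key : ∀ n : ℕ, Real.sqrt (n + 1) ≤ φ (n + 1) := by
    intro n
    induction n with
    | zero =>
      simp [hφ 1]
    | succ m ih =>
      have hm1 : (0:ℝ) < (m:ℝ) + 1 := by positivity
      have hf2 := hf (m + 2)
      have h1 : (1 : ℝ) + 1 / (2 * ((m:ℝ) + 1)) ≤
          1 + 1 / ((m:ℝ) + 1) - f (m + 2) / (2 * ((m:ℝ) + 1)) := by
        have hfle : f (m+2) / (2*((m:ℝ)+1)) ≤ 1 / (2*((m:ℝ)+1)) := by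
          gcongr
          exact hf2.2
        have heq : 1/((m:ℝ)+1) - 1/(2*((m:ℝ)+1)) = 1/(2*((m:ℝ)+1)) := by
          field_simp
          ring
        linarith
      have hfpos : (0:ℝ) ≤ 1 + 1 / ((m:ℝ) + 1) - f (m + 2) / (2 * ((m:ℝ) + 1)) := by
        have : (0:ℝ) ≤ 1 / (2 * ((m:ℝ) + 1)) := by positivity
        linarith
      have hfact : Real.sqrt ((m:ℝ) + 2) ≤
          Real.sqrt ((m:ℝ) + 1) * (1 + 1 / ((m:ℝ) + 1) - f (m + 2) / (2 * ((m:ℝ) + 1))) := by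
        have h2 : Real.sqrt ((m:ℝ) + 2) ≤
            Real.sqrt ((m:ℝ) + 1) * (1 + 1 / (2 * ((m:ℝ) + 1))) := by
          have hsq : ((m:ℝ) + 2) ≤ (((m:ℝ) + 1) * (1 + 1 / (2 * ((m:ℝ) + 1)))^2) := by
            field_simp
            nlinarith
          calc Real.sqrt ((m:ℝ) + 2)
              ≤ Real.sqrt (((m:ℝ) + 1) * (1 + 1 / (2 * ((m:ℝ) + 1)))^2) :=
                Real.sqrt_le_sqrt hsq
            _ = Real.sqrt ((m:ℝ) + 1) * (1 + 1 / (2 * ((m:ℝ) + 1))) := by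
                rw [Real.sqrt_mul (by positivity), Real.sqrt_sq (by positivity)]
        calc Real.sqrt ((m:ℝ) + 2) ≤ Real.sqrt ((m:ℝ)+1) * (1 + 1 / (2 * ((m:ℝ) + 1))) := h2
          _ ≤ _ := mul_le_mul_of_nonneg_left h1 (Real.sqrt_nonneg _)
      have hprod : φ (m + 2) = φ (m + 1) *
          (1 + 1 / ((m:ℝ) + 1) - f (m + 2) / (2 * ((m:ℝ) + 1))) := by
        rw [hφ (m + 2), hφ (m + 1)]
        rw [show (m + 2) - 1 = (m + 1) from rfl, show (m + 1) - 1 = m from rfl,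
          Finset.prod_Icc_succ_top (Nat.le_add_left 1 m)]
        push_cast
        ring
      rw [hprod]
      calc Real.sqrt ((m + 1 : ℕ) + 1)
          = Real.sqrt ((m:ℝ) + 2) := by push_cast; ring_nf
        _ ≤ Real.sqrt ((m:ℝ) + 1) * (1 + 1 / ((m:ℝ) + 1) - f (m + 2) / (2 * ((m:ℝ) + 1))) := hfact
        _ ≤ φ (m + 1) * (1 + 1 / ((m:ℝ) + 1) - f (m + 2) / (2 * ((m:ℝ) + 1))) :=
            mul_le_mul_of_nonneg_right ih hfpos
  intro t ht
  obtain ⟨n, rfl⟩ := Nat.exists_eq_add_of_le ht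
  rw [one_mul, add_comm 1 n]
  have := key n
  push_cast at this ⊢
  exact this
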